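/- Let 𝒜 be an abelian category, let i₁ : T₁' ⟶ T₁'' and i₂ : T₂' ⟶ T₂'' be monomorphisms, and let p₁ : T₁'' ⟶ X₁ and p₂ : T₂'' ⟶ X₂ be cokernel projections of i₁ and i₂ respectively. Assume Ext¹(T₁'', T₂') = 0; equivalently, every short exact sequence 0 → T₂' → Y → T₁'' → 0 in 𝒜 splits. Then for every morphism c : X₁ ⟶ X₂ there exist morphisms a : T₁' ⟶ T₂' and b : T₁'' ⟶ T₂'' such that i₂ ∘ a = b ∘ i₁ and c ∘ p₁ = p₂ ∘ b. -/

import Mathlib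

open CategoryTheory CategoryTheory.Limits

/-- Fullness part of the equivalence between the fundamental domain and the ambient
category: given monomorphisms `i₁ : T₁' ⟶ T₁''` and `i₂ : T₂' ⟶ T₂''` in an abelian
category with cokernel projections `p₁ : T₁'' ⟶ X₁` and `p₂ : T₂'' ⟶ X₂`, and assuming
`Ext¹(T₁'', T₂') = 0` — expressed by the hypothesis that every short exact sequence
`0 → T₂' → Y → T₁'' → 0` splits — every morphism `c : X₁ ⟶ X₂` lifts to a morphism
of two-term complexes: there exist `a : T₁' ⟶ T₂'` and `b : T₁'' ⟶ T₂''` with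
`i₂ ∘ a = b ∘ i₁` and `c ∘ p₁ = p₂ ∘ b`. -/
theorem lift_of_morphism_on_cokernels
    {𝒜 : Type*} [Category 𝒜] [Abelian 𝒜]
    {T₁' T₁'' T₂' T₂'' X₁ X₂ : 𝒜}
    (i₁ : T₁' ⟶ T₁'') (i₂ : T₂' ⟶ T₂'') [Mono i₁] [Mono i₂]
    (p₁ : T₁'' ⟶ X₁) (p₂ : T₂'' ⟶ X₂)
    (hi₁p₁ : i₁ ≫ p₁ = 0) (hi₂p₂ : i₂ ≫ p₂ = 0)
    (hp₁ : IsColimit (CokernelCofork.ofπ p₁ hi₁p₁))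
    (hp₂ : IsColimit (CokernelCofork.ofπ p₂ hi₂p₂))
    (hext : ∀ (Y : 𝒜) (f : T₂' ⟶ Y) (g : Y ⟶ T₁'') (hfg : f ≫ g = 0),
      Mono f → Nonempty (IsColimit (CokernelCofork.ofπ g hfg)) →
        ∃ σ : T₁'' ⟶ Y, σ ≫ g = 𝟙 T₁'')
    (c : X₁ ⟶ X₂) :
    ∃ (a : T₁' ⟶ T₂') (b : T₁'' ⟶ T₂''), a ≫ i₂ = i₁ ≫ b ∧ p₁ ≫ c = b ≫ p₂ := by
  -- i₂ is a kernel of p₂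
  have hker : IsLimit (KernelFork.ofι i₂ hi₂p₂) :=
    Abelian.monoIsKernelOfCokernel _ hp₂
  -- p₂ is epi
  have hepi : Epi p₂ := ⟨fun g h w => Cofork.IsColimit.hom_ext hp₂ w⟩
  -- form the pullback Y of p₁ ≫ c and p₂
  let Y := pullback (p₁ ≫ c) p₂
  let fst : Y ⟶ T₁'' := pullback.fst _ _
  let snd : Y ⟶ T₂'' := pullback.snd _ _
  have hfstepi : Epi fst := Abelian.epi_pullback_of_epi_g _ _
  have hk0 : (0 : T₂' ⟶ T₁'') ≫ (p₁ ≫ c) = i₂ ≫ p₂ := by simp [hi₂p₂]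
  let k : T₂' ⟶ Y := pullback.lift 0 i₂ hk0
  have hkfst : k ≫ fst = 0 := by exact pullback.lift_fst _ _ _
  have hksnd : k ≫ snd = i₂ := by exact pullback.lift_snd _ _ _
  have hkmono : Mono k := by
    refine ⟨fun g h w => ?_⟩
    have : g ≫ i₂ = h ≫ i₂ := by
      rw [← hksnd, ← Category.assoc, ← Category.assoc, w]
    exact (cancel_mono i₂).mp this
  -- k is a kernel of fst
  have hkker : IsLimit (KernelFork.ofι k hkfst) := by
    refine KernelFork.IsLimit.ofι _ _ (fun {W} t ht => hker.lift (KernelFork.ofι (t ≫ snd)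
      (by rw [Category.assoc, show snd ≫ p₂ = fst ≫ (p₁ ≫ c) from pullback.condition.symm,
            ← Category.assoc, ht, zero_comp]))) ?_ ?_
    · intro W t ht
      apply pullback.hom_ext
      · show (_ ≫ k) ≫ fst = t ≫ fst
        rw [Category.assoc, hkfst, comp_zero, ht]
      · show (_ ≫ k) ≫ snd = t ≫ snd
        rw [Category.assoc, hksnd]
        exact Fork.IsLimit.lift_ι hker
    · intro W t ht u hu
      haveI := hkmono
      apply (cancel_mono k).mp
      rw [hu]
      apply pullback.hom_ext
      · show t ≫ fst = (_ ≫ k) ≫ fst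
        rw [Category.assoc, hkfst, comp_zero, ht]
      · show t ≫ snd = (_ ≫ k) ≫ snd
        symm
        rw [Category.assoc, hksnd]
        exact Fork.IsLimit.lift_ι hker
  -- fst is a cokernel of k
  have hcoker : IsColimit (CokernelCofork.ofπ fst hkfst) := by
    haveI := hfstepi
    exact Abelian.epiIsCokernelOfKernel _ hkker
  obtain ⟨σ, hσ⟩ := hext Y k fst hkfst hkmono ⟨hcoker⟩
  refine ⟨?_, σ ≫ snd, ?_, ?_⟩
  · -- a : lift i₁ ≫ σ ≫ snd through kernel i₂
    exact hker.lift (KernelFork.ofι (i₁ ≫ σ ≫ snd)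
      (by simp only [Category.assoc]
          rw [show snd ≫ p₂ = fst ≫ (p₁ ≫ c) from pullback.condition.symm,
            ← Category.assoc σ, hσ, Category.id_comp, ← Category.assoc, hi₁p₁, zero_comp]))
  · exact Fork.IsLimit.lift_ι hker
  · rw [Category.assoc, show snd ≫ p₂ = fst ≫ (p₁ ≫ c) from pullback.condition.symm,
      ← Category.assoc, hσ, Category.id_comp]
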